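/- If the predictions are perfect, i.e., c̃_t = c_t for every t = 1,…,T, then the optimistic expert's regret is non-positive, R^(o) = ∑_{t=1}^T c_t·(y⋆ − y_t^(o)) ≤ 0, and consequently Algorithm XC satisfies R^(xc) ≤ 2w√(2T). -/

import Mathlib

open Finset

/-- Dot product of real vectors indexed by a fintype. -/
def dot {ι : Type*} [Fintype ι] (a b : ι → ℝ) : ℝ := ∑ i, a i * b i

/-- The single-cache feasible set `Y = {y ∈ [0,1]^N : ∑_n y_n ≤ C}`. -/
def FeasibleY (N C : ℕ) (y : Fin N → ℝ) : Prop :=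
  (∀ n, y n ∈ Set.Icc (0 : ℝ) 1) ∧ ∑ n, y n ≤ (C : ℝ)

/-- The 2-dimensional probability simplex `Δ`. -/
def Simplex2 (u : Fin 2 → ℝ) : Prop := 0 ≤ u 0 ∧ 0 ≤ u 1 ∧ u 0 + u 1 = 1


lemma aux_ring (x a e l0 l1 : ℝ) :
    (x - (a + e*l0))^2 + ((1-x) - ((1-a) + e*l1))^2
      = 2*(x - (a + e*(l0-l1)/2))^2 + (e^2*(l0+l1)^2)/2 := by ring

lemma aux_clamp (a' m b : ℝ) (ha0 : 0 ≤ a') (ha1 : a' ≤ 1) (hb0 : 0 ≤ b) (hb1 : b ≤ 1)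
    (h : ∀ x : ℝ, 0 ≤ x → x ≤ 1 → (a'-m)^2 ≤ (x-m)^2) : (a'-b)^2 ≤ (m-b)^2 := by
  rcases le_or_gt m 0 with hm | hm
  · have h0 := h 0 le_rfl zero_le_one
    have ha : a' = 0 := by nlinarith
    subst ha; nlinarith
  rcases le_or_gt 1 m with hm1 | hm1
  · have h1 := h 1 zero_le_one le_rfl
    have ha : a' = 1 := by nlinarith
    subst ha; nlinarith
  · have h2 := h m hm.le hm1.le
    have ha : a' = m := by nlinarith [sq_nonneg (a'-m)]
    subst ha; simp

lemma aux_telescope (w : ℝ) (hw : 0 ≤ w) (d : ℕ → ℝ)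
    (hd : ∀ t, 1 ≤ t → 0 ≤ d t ∧ d t ≤ 1) (T : ℕ) :
    ∑ t ∈ Icc 1 T, w * Real.sqrt t * (d t - d (t+1))
      ≤ w * Real.sqrt T * (1 - d (T+1)) := by
  induction T with
  | zero => simp
  | succ T ih =>
    rw [Finset.sum_Icc_succ_top (by omega)]
    have h1 : Real.sqrt T ≤ Real.sqrt ((T:ℕ)+1 : ℕ) := by
      apply Real.sqrt_le_sqrt; push_cast; linarith
    have hd1 := hd (T+1) (by omega)
    have hd2 := hd (T+2) (by omega)
    have hkey : w * Real.sqrt T * (1 - d (T+1)) ≤ w * Real.sqrt ((T:ℕ)+1:ℕ) * (1 - d (T+1)) := by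
      apply mul_le_mul_of_nonneg_right _ (by linarith [hd1.2])
      exact mul_le_mul_of_nonneg_left h1 hw
    push_cast at *
    nlinarith [Real.sqrt_nonneg ((T:ℝ)+1)]

lemma aux_sum_inv_sqrt (T : ℕ) : ∑ t ∈ Icc 1 T, 1 / Real.sqrt t ≤ 2 * Real.sqrt T := by
  induction T with
  | zero => simp
  | succ T ih =>
    rw [Finset.sum_Icc_succ_top (by omega)]
    have hr : (0:ℝ) < Real.sqrt ((T:ℝ)+1) := Real.sqrt_pos.2 (by positivity)
    have hs := Real.sqrt_nonneg (T:ℝ)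
    have hsq : Real.sqrt (T:ℝ) ^ 2 = T := Real.sq_sqrt (by positivity)
    have hrq : Real.sqrt ((T:ℝ)+1) ^ 2 = (T:ℝ)+1 := Real.sq_sqrt (by positivity)
    have key : 2 * Real.sqrt (T:ℝ) + 1 / Real.sqrt ((T:ℝ)+1) ≤ 2 * Real.sqrt ((T:ℝ)+1) := by
      have h2 : 1 / Real.sqrt ((T:ℝ)+1) ≤ 2 * Real.sqrt ((T:ℝ)+1) - 2 * Real.sqrt (T:ℝ) := by
        rw [div_le_iff₀ hr]
        nlinarith [sq_nonneg (Real.sqrt ((T:ℝ)+1) - Real.sqrt (T:ℝ))]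
      linarith
    push_cast
    push_cast at ih
    linarith

set_option maxHeartbeats 1000000

/-- **Perfect predictions for XC.** If `c̃_t = c_t` for every `t = 1, …, T`, the
optimistic expert's regret is non-positive, `R^{(o)} ≤ 0`, and consequently
Algorithm XC satisfies `R^{(xc)} ≤ 2w√(2T)`. -/
theorem xc_perfect_predictions
    (N C T : ℕ) (hN : 1 ≤ N) (hC : 1 ≤ C) (hCN : C < N) (hT : 1 ≤ T)
    (w : ℝ) (hw : 0 < w)
    (wt : ℕ → ℝ) (hwt : ∀ t, wt t ∈ Set.Icc 0 w) (nt : ℕ → Fin N)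
    -- utility gradients `c_t = w_t e_{n_t}`
    (c : ℕ → Fin N → ℝ) (hc : ∀ t, c t = fun n => if n = nt t then wt t else 0)
    -- predictions
    (ctil : ℕ → Fin N → ℝ)
    -- pessimistic expert: FTRL with zero predictions
    (G : ℕ → ℝ) (hG : ∀ t, G t = ∑ τ ∈ Finset.Icc 1 t, ∑ n, (c τ n) ^ 2)
    (σ : ℝ) (hσ : σ = 2 / Real.sqrt (2 * (C : ℝ)))
    (σt : ℕ → ℝ) (hσt : ∀ t, σt t = σ * (Real.sqrt (G t) - Real.sqrt (G (t - 1))))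
    (yp : ℕ → Fin N → ℝ)
    (hyp1 : FeasibleY N C (yp 1))
    (hpstep : ∀ t, 1 ≤ t →
      FeasibleY N C (yp (t + 1)) ∧
      ∀ y', FeasibleY N C y' →
        (∑ τ ∈ Finset.Icc 1 t, σt τ / 2 * ∑ n, (yp (t + 1) n - yp τ n) ^ 2)
            - dot (fun n => ∑ τ ∈ Finset.Icc 1 t, c τ n) (yp (t + 1))
          ≤ (∑ τ ∈ Finset.Icc 1 t, σt τ / 2 * ∑ n, (y' n - yp τ n) ^ 2)
            - dot (fun n => ∑ τ ∈ Finset.Icc 1 t, c τ n) y')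
    -- optimistic expert: plays a maximizer of the predicted utility
    (yo : ℕ → Fin N → ℝ)
    -- experts' utility vectors `l_t = (c_t·y_t^{(p)}, c_t·y_t^{(o)})`
    (l : ℕ → Fin 2 → ℝ) (hl : ∀ t, l t = ![dot (c t) (yp t), dot (c t) (yo t)])
    -- meta-learner: online gradient ascent on the simplex
    (u : ℕ → Fin 2 → ℝ) (hu1 : Simplex2 (u 1))
    (hustep : ∀ t, 1 ≤ t →
      Simplex2 (u (t + 1)) ∧
      ∀ v, Simplex2 v →
        ∑ k, (u (t + 1) k - (u t k + 1 / (w * Real.sqrt (t : ℝ)) * l t k)) ^ 2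
          ≤ ∑ k, (v k - (u t k + 1 / (w * Real.sqrt (t : ℝ)) * l t k)) ^ 2)
    -- combined caching decisions
    (y : ℕ → Fin N → ℝ)
    (hy : ∀ t, y t = fun n => u t 0 * yp t n + u t 1 * yo t n)
    -- best static configuration in hindsight
    (ystar : Fin N → ℝ) (hystar : FeasibleY N C ystar)
    (hystarmax : ∀ y', FeasibleY N C y' →
      ∑ t ∈ Finset.Icc 1 T, dot (c t) y' ≤ ∑ t ∈ Finset.Icc 1 T, dot (c t) ystar)
    -- optimistic expert plays a maximizer of the predicted utility in every slot
    (hostep : ∀ t, 1 ≤ t → t ≤ T →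
      FeasibleY N C (yo t) ∧
      ∀ y', FeasibleY N C y' → dot (ctil t) y' ≤ dot (ctil t) (yo t))
    -- the predictions are perfect
    (hperfect : ∀ t, 1 ≤ t → t ≤ T → ctil t = c t) :
    (∑ t ∈ Finset.Icc 1 T, dot (c t) (fun n => ystar n - yo t n) ≤ 0) ∧
    (∑ t ∈ Finset.Icc 1 T, dot (c t) (fun n => ystar n - y t n)
        ≤ 2 * w * Real.sqrt (2 * (T : ℝ))) := by
  -- basic facts
  have hdotc : ∀ t (z : Fin N → ℝ), dot (c t) z = wt t * z (nt t) := by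
    intro t z
    simp [dot, hc t, ite_mul]
  have hfeasp : ∀ t, 1 ≤ t → FeasibleY N C (yp t) := by
    intro t ht
    induction t, ht using Nat.le_induction with
    | base => exact hyp1
    | succ t ht ih => exact (hpstep t ht).1
  have husx : ∀ t, 1 ≤ t → Simplex2 (u t) := by
    intro t ht
    induction t, ht using Nat.le_induction with
    | base => exact hu1
    | succ t ht ih => exact (hustep t ht).1
  have hdotbd : ∀ t (z : Fin N → ℝ), FeasibleY N C z →
      0 ≤ dot (c t) z ∧ dot (c t) z ≤ w := by
    intro t z hz
    rw [hdotc]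
    have hz1 := (hz.1 (nt t)).1
    have hz2 := (hz.1 (nt t)).2
    have hw1 := (hwt t).1
    have hw2 := (hwt t).2
    constructor
    · exact mul_nonneg hw1 hz1
    · nlinarith
  -- bounds on expert utilities
  have hlbd : ∀ t, 1 ≤ t → t ≤ T →
      (0 ≤ l t 0 ∧ l t 0 ≤ w) ∧ (0 ≤ l t 1 ∧ l t 1 ≤ w) := by
    intro t h1 h2
    rw [hl t]
    simp only [Matrix.cons_val_zero, Matrix.cons_val_one, Matrix.head_cons]
    exact ⟨hdotbd t (yp t) (hfeasp t h1), hdotbd t (yo t) ((hostep t h1 h2).1)⟩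
  -- Part 1: optimistic expert regret is nonpositive
  have part1 : ∀ t, 1 ≤ t → t ≤ T →
      dot (c t) (fun n => ystar n - yo t n) ≤ 0 := by
    intro t h1 h2
    have ho := (hostep t h1 h2).2 ystar hystar
    rw [hperfect t h1 h2] at ho
    have e : dot (c t) (fun n => ystar n - yo t n)
        = dot (c t) ystar - dot (c t) (yo t) := by
      simp [dot, mul_sub, Finset.sum_sub_distrib]
    linarith
  have part1sum : ∑ t ∈ Finset.Icc 1 T, dot (c t) (fun n => ystar n - yo t n) ≤ 0 := by
    apply Finset.sum_nonpos
    intro t ht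
    rw [Finset.mem_Icc] at ht
    exact part1 t ht.1 ht.2
  refine ⟨part1sum, ?_⟩
  -- per-step OGA inequality
  have step : ∀ t, 1 ≤ t → t ≤ T →
      (l t 0 - l t 1) * (0 - u t 0)
        ≤ w * Real.sqrt t * ((u t 0)^2 - (u (t+1) 0)^2) + w / 4 * (1 / Real.sqrt t) := by
    intro t h1 h2
    have hst : (0:ℝ) < Real.sqrt t := Real.sqrt_pos.2 (by positivity)
    have hs : (0:ℝ) < w * Real.sqrt t := mul_pos hw hst
    set s : ℝ := w * Real.sqrt t with hsdef
    have husim := husx t h1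
    have husim' := (hustep t h1).1
    have hu1t : u t 1 = 1 - u t 0 := by
      have := husim.2.2; linarith
    have hu1t' : u (t+1) 1 = 1 - u (t+1) 0 := by
      have := husim'.2.2; linarith
    set a : ℝ := u t 0 with hadef
    set a' : ℝ := u (t+1) 0 with ha'def
    set l0 : ℝ := l t 0 with hl0def
    set l1 : ℝ := l t 1 with hl1def
    have hg2 : (l0 - l1)^2 ≤ w^2 := by
      obtain ⟨⟨q1, q2⟩, q3, q4⟩ := hlbd t h1 h2
      nlinarith
    have hproj : ∀ x : ℝ, 0 ≤ x → x ≤ 1 →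
        (a' - (a + 1/s*(l0-l1)/2))^2 ≤ (x - (a + 1/s*(l0-l1)/2))^2 := by
      intro x hx0 hx1
      have hv : Simplex2 ![x, 1-x] := by
        refine ⟨?_, ?_, ?_⟩ <;> simp [Matrix.cons_val_zero, Matrix.cons_val_one] <;> linarith
      have h := (hustep t h1).2 ![x, 1-x] hv
      rw [Fin.sum_univ_two, Fin.sum_univ_two] at h
      simp only [Matrix.cons_val_zero, Matrix.cons_val_one, Matrix.head_cons] at h
      rw [hu1t, hu1t'] at h
      have e1 := aux_ring a' a (1/s) l0 l1
      have e2 := aux_ring x a (1/s) l0 l1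
      rw [← hadef, ← ha'def, ← hl0def, ← hl1def] at h
      nlinarith [h, e1, e2]
    have hcl := aux_clamp a' (a + 1/s*(l0-l1)/2) 0 husim'.1
      (by have := husim'.2.1; linarith) le_rfl zero_le_one hproj
    -- hcl : (a' - 0)^2 ≤ (a + 1/s*(l0-l1)/2 - 0)^2
    have hkey : a'^2 ≤ a^2 + (l0-l1)*a/s + (l0-l1)^2/(4*s^2) := by
      have e : (a + 1/s*(l0-l1)/2 - 0)^2 = a^2 + (l0-l1)*a/s + (l0-l1)^2/(4*s^2) := by
        field_simp; ring
      rw [e] at hcl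
      have e2 : (a' - 0)^2 = a'^2 := by ring
      linarith [e2 ▸ hcl]
    -- multiply through by s > 0
    have hmul : s * a'^2 ≤ s * a^2 + (l0-l1)*a + (l0-l1)^2/(4*s) := by
      have h3 := mul_le_mul_of_nonneg_left hkey hs.le
      have e3 : s * (a^2 + (l0-l1)*a/s + (l0-l1)^2/(4*s^2))
          = s * a^2 + (l0-l1)*a + (l0-l1)^2/(4*s) := by
        field_simp
      rw [e3] at h3; linarith
    have hlast : (l0 - l1)^2/(4*s) ≤ w / 4 * (1 / Real.sqrt t) := by
      rw [div_le_iff₀ (by positivity)]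
      have : w / 4 * (1 / Real.sqrt t) * (4 * s) = w^2 := by
        rw [hsdef]; field_simp
      rw [this]; exact hg2
    nlinarith [hmul, hlast]
  -- decomposition of the regret
  have decomp : ∀ t, 1 ≤ t → t ≤ T →
      dot (c t) (fun n => ystar n - y t n)
        = dot (c t) (fun n => ystar n - yo t n) + (l t 0 - l t 1) * (0 - u t 0) := by
    intro t h1 h2
    have husim := husx t h1
    have hu1t : u t 1 = 1 - u t 0 := by have := husim.2.2; linarith
    rw [hdotc, hdotc]
    have hyv : y t (nt t) = u t 0 * yp t (nt t) + u t 1 * yo t (nt t) := by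
      rw [hy t]
    have hl0 : l t 0 = wt t * yp t (nt t) := by
      rw [hl t]; simp only [Matrix.cons_val_zero]; rw [hdotc]
    have hl1 : l t 1 = wt t * yo t (nt t) := by
      rw [hl t]; simp only [Matrix.cons_val_one, Matrix.head_cons, Matrix.cons_val_zero]; rw [hdotc]
    rw [hyv, hl0, hl1, hu1t]; ring
  -- sum up
  have sum_eq : ∑ t ∈ Finset.Icc 1 T, dot (c t) (fun n => ystar n - y t n)
      = (∑ t ∈ Finset.Icc 1 T, dot (c t) (fun n => ystar n - yo t n))
        + ∑ t ∈ Finset.Icc 1 T, (l t 0 - l t 1) * (0 - u t 0) := by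
    rw [← Finset.sum_add_distrib]
    apply Finset.sum_congr rfl
    intro t ht
    rw [Finset.mem_Icc] at ht
    exact decomp t ht.1 ht.2
  have sum2 : ∑ t ∈ Finset.Icc 1 T, (l t 0 - l t 1) * (0 - u t 0)
      ≤ 3/2 * w * Real.sqrt T := by
    have h1 : ∑ t ∈ Finset.Icc 1 T, (l t 0 - l t 1) * (0 - u t 0)
        ≤ ∑ t ∈ Finset.Icc 1 T,
          (w * Real.sqrt t * ((u t 0)^2 - (u (t+1) 0)^2) + w / 4 * (1 / Real.sqrt t)) := by
      apply Finset.sum_le_sum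
      intro t ht
      rw [Finset.mem_Icc] at ht
      exact step t ht.1 ht.2
    rw [Finset.sum_add_distrib] at h1
    have h2 : ∑ t ∈ Finset.Icc 1 T, w * Real.sqrt t * ((u t 0)^2 - (u (t+1) 0)^2)
        ≤ w * Real.sqrt T * (1 - (u (T+1) 0)^2) := by
      exact aux_telescope w hw.le (fun t => (u t 0)^2)
        (fun t ht => by
          have hs := husx t ht
          have h0 := hs.1
          have h1' : u t 0 ≤ 1 := by have := hs.2.1; have := hs.2.2; linarith
          constructor
          · positivity
          · nlinarith [mul_le_mul_of_nonneg_left h1' h0]) T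
    have h3 : ∑ t ∈ Finset.Icc 1 T, w / 4 * (1 / Real.sqrt t)
        ≤ w / 4 * (2 * Real.sqrt T) := by
      rw [← Finset.mul_sum]
      exact mul_le_mul_of_nonneg_left (aux_sum_inv_sqrt T) (by positivity)
    have h4 : (0:ℝ) ≤ w * Real.sqrt T * ((u (T+1) 0)^2) := by positivity
    nlinarith [Real.sqrt_nonneg (T:ℝ)]
  -- final arithmetic
  have hsqrt2 : (1:ℝ) ≤ Real.sqrt 2 := by
    have := Real.sqrt_le_sqrt (show (1:ℝ) ≤ 2 by norm_num)
    rwa [Real.sqrt_one] at this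
  have hsplit : Real.sqrt (2 * (T:ℝ)) = Real.sqrt 2 * Real.sqrt (T:ℝ) :=
    Real.sqrt_mul (by norm_num) _
  have hfin : 3/2 * w * Real.sqrt T ≤ 2 * w * Real.sqrt (2 * (T:ℝ)) := by
    rw [hsplit]
    nlinarith [mul_nonneg (mul_nonneg hw.le (Real.sqrt_nonneg (T:ℝ))) (sub_nonneg.2 hsqrt2),
      mul_nonneg hw.le (Real.sqrt_nonneg (T:ℝ))]
  rw [sum_eq]
  linarith
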